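/- Assume ∫_G δ_λ(g)⁴ dπ(g) < ∞, ∫_G c(g)^{1/2} δ_λ(g)⁴ dπ(g) < ∞ and ∫_G c(g) δ_λ(g)² dπ(g) < ∞. Then there exists a constant E₀ > 0 such that for every f ∈ L₁ and every t ∈ ℝ: ‖Q(t)f − Qf‖₃ ≤ E₀ |t| ‖f‖₁. -/

import Mathlib

open MeasureTheory ENNReal

section helpers
lemma sqrt_add_le' {a b : ℝ} (ha : 0 ≤ a) (hb : 0 ≤ b) :
    Real.sqrt (a + b) ≤ Real.sqrt a + Real.sqrt b := by
  have h1 : a + b ≤ (Real.sqrt a + Real.sqrt b) ^ 2 := by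
    nlinarith [Real.sq_sqrt ha, Real.sq_sqrt hb, Real.sqrt_nonneg a, Real.sqrt_nonneg b,
      mul_nonneg (Real.sqrt_nonneg a) (Real.sqrt_nonneg b)]
  calc Real.sqrt (a + b) ≤ Real.sqrt ((Real.sqrt a + Real.sqrt b) ^ 2) := Real.sqrt_le_sqrt h1
    _ = Real.sqrt a + Real.sqrt b := Real.sqrt_sq (by positivity)

lemma norm_exp_I_mul (θ : ℝ) : ‖Complex.exp (Complex.I * θ)‖ = 1 := by
  rw [Complex.norm_exp]
  simp

lemma norm_exp_I_mul_sub_one (θ : ℝ) : ‖Complex.exp (Complex.I * θ) - 1‖ ≤ 2 * |θ| := by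
  rcases le_or_gt |θ| 1 with h | h
  · have := Complex.norm_exp_sub_one_le (x := Complex.I * θ) (by
      rw [norm_mul, Complex.norm_I, one_mul, Complex.norm_real, Real.norm_eq_abs]; exact h)
    calc ‖Complex.exp (Complex.I * θ) - 1‖ ≤ 2 * ‖Complex.I * θ‖ := this
      _ = 2 * |θ| := by rw [norm_mul, Complex.norm_I, one_mul, Complex.norm_real, Real.norm_eq_abs]
  · calc ‖Complex.exp (Complex.I * θ) - 1‖ ≤ ‖Complex.exp (Complex.I * θ)‖ + ‖(1:ℂ)‖ :=
        norm_sub_le _ _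
      _ = 2 := by rw [norm_exp_I_mul]; norm_num
      _ ≤ 2 * |θ| := by nlinarith

lemma norm_exp_I_mul_sub_exp_I_mul (a b : ℝ) :
    ‖Complex.exp (Complex.I * a) - Complex.exp (Complex.I * b)‖ ≤ 2 * |a - b| := by
  have hfac : Complex.exp (Complex.I * a) - Complex.exp (Complex.I * b)
      = Complex.exp (Complex.I * b) * (Complex.exp (Complex.I * ((a - b : ℝ) : ℂ)) - 1) := by
    rw [mul_sub, mul_one, ← Complex.exp_add]
    push_cast
    ring_nf
  rw [hfac, norm_mul, norm_exp_I_mul, one_mul]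
  exact norm_exp_I_mul_sub_one (a - b)

lemma mono3 {a a' b b' c c' : ℝ} (ha0 : 0 ≤ a) (hb0 : 0 ≤ b) (hc0 : 0 ≤ c)
    (ha : a ≤ a') (hb : b ≤ b') (hc : c ≤ c') : a * b * c ≤ a' * b' * c' :=
  mul_le_mul (mul_le_mul ha hb hb0 (ha0.trans ha)) hc hc0
    (mul_nonneg (ha0.trans ha) (hb0.trans hb))
end helpers

set_option maxHeartbeats 1000000 in
/-- Lemma 3.3 of the paper: `‖Q(t)f − Qf‖₃ ≤ E₀ |t| ‖f‖₁` for every `f ∈ L₁` and `t ∈ ℝ`. -/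
theorem stmt_13
    {E : Type*} [MetricSpace E] [MeasurableSpace E] [BorelSpace E]
    (hballs : ∀ (x : E) (r : ℝ), IsCompact (Metric.closedBall x r))
    (x₀ : E)
    -- the Lipschitz transformations of `E`
    {G : Type*} [MeasurableSpace G]
    (act : G → E → E) (hact : Measurable fun p : G × E => act p.1 p.2)
    (c : G → ℝ) (hc0 : ∀ g, 0 ≤ c g)
    (hcLip : ∀ g x y, dist (act g x) (act g y) ≤ c g * dist x y)
    (hcLeast : ∀ g r, 0 ≤ r → (∀ x y, dist (act g x) (act g y) ≤ r * dist x y) → c g ≤ r)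
    (π : Measure G) [IsProbabilityMeasure π]
    -- the Lipschitz function `ξ`, the kernel `Q` and the Fourier kernels `Q(t)`
    (ξ : E → ℝ) (C : ℝ) (hC : 0 ≤ C) (hξLip : ∀ x y, |ξ x - ξ y| ≤ C * dist x y)
    (Qop : (E → ℂ) → E → ℂ) (hQop : ∀ f x, Qop f x = ∫ g, f (act g x) ∂π)
    (Qt : ℝ → (E → ℂ) → E → ℂ)
    (hQt : ∀ t f x, Qt t f x = ∫ g, Complex.exp (Complex.I * t * ξ (act g x)) * f (act g x) ∂π)
    -- the weights `p_λ` and `δ_λ`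
    (lam : ℝ) (hlam0 : 0 < lam) (hlam1 : lam ≤ 1)
    (pl : E → ℝ) (hpl : ∀ x, pl x = 1 + lam * Real.sqrt (dist x x₀))
    (δ : G → ℝ) (hδ : ∀ g, δ g = Real.sqrt (max (c g) 1) + lam * Real.sqrt (dist (act g x₀) x₀))
    -- the seminorms `m_γ` and `|·|_γ` for `γ = 1, 3`
    (m1 : (E → ℂ) → ℝ≥0∞)
    (hm1 : ∀ f, m1 f = ⨆ (x : E) (y : E),
      (‖f x - f y‖₊ : ℝ≥0∞) / ENNReal.ofReal (Real.sqrt (dist x y) * pl x * pl y))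
    (i1 : (E → ℂ) → ℝ≥0∞)
    (hi1 : ∀ f, i1 f = ⨆ x : E, (‖f x‖₊ : ℝ≥0∞) / ENNReal.ofReal (pl x ^ 2))
    (m3 : (E → ℂ) → ℝ≥0∞)
    (hm3 : ∀ f, m3 f = ⨆ (x : E) (y : E),
      (‖f x - f y‖₊ : ℝ≥0∞) / ENNReal.ofReal (Real.sqrt (dist x y) * pl x ^ 3 * pl y ^ 3))
    (i3 : (E → ℂ) → ℝ≥0∞)
    (hi3 : ∀ f, i3 f = ⨆ x : E, (‖f x‖₊ : ℝ≥0∞) / ENNReal.ofReal (pl x ^ 4))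
    -- the moment hypotheses
    (h4 : Integrable (fun g => δ g ^ 4) π)
    (hc4 : Integrable (fun g => Real.sqrt (c g) * δ g ^ 4) π)
    (hc2 : Integrable (fun g => c g * δ g ^ 2) π) :
    ∃ E₀ > (0 : ℝ), ∀ f : E → ℂ, ∀ t : ℝ,
      m3 (fun x => Qt t f x - Qop f x) + i3 (fun x => Qt t f x - Qop f x)
        ≤ ENNReal.ofReal (E₀ * |t|) * (m1 f + i1 f) := by
  -- basic facts about `pl` and `δ`
  have hpl1 : ∀ x : E, 1 ≤ pl x := by
    intro x; rw [hpl]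
    nlinarith [Real.sqrt_nonneg (dist x x₀), hlam0.le]
  have hplnn : ∀ x : E, 0 ≤ pl x := fun x => le_trans zero_le_one (hpl1 x)
  have hδ1 : ∀ g, 1 ≤ δ g := by
    intro g; rw [hδ]
    have h1 : (1:ℝ) ≤ Real.sqrt (max (c g) 1) := by
      rw [show (1:ℝ) = Real.sqrt 1 by simp]
      exact Real.sqrt_le_sqrt (by rw [Real.sqrt_one]; exact le_max_right _ _)
    nlinarith [Real.sqrt_nonneg (dist (act g x₀) x₀), hlam0.le]
  have hδ0 : ∀ g, 0 ≤ δ g := fun g => le_trans zero_le_one (hδ1 g)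
  have hsqc : ∀ g, Real.sqrt (c g) ≤ δ g := by
    intro g; rw [hδ]
    have h1 : Real.sqrt (c g) ≤ Real.sqrt (max (c g) 1) := Real.sqrt_le_sqrt (le_max_left _ _)
    nlinarith [Real.sqrt_nonneg (dist (act g x₀) x₀), hlam0.le]
  have hcδ2 : ∀ g, c g ≤ δ g ^ 2 := by
    intro g
    calc c g = Real.sqrt (c g) ^ 2 := (Real.sq_sqrt (hc0 g)).symm
      _ ≤ δ g ^ 2 := pow_le_pow_left₀ (Real.sqrt_nonneg _) (hsqc g) 2
  have hd1 : ∀ x : E, lam ^ 2 * dist x x₀ ≤ pl x ^ 2 := by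
    intro x
    have h1 : lam * Real.sqrt (dist x x₀) ≤ pl x := by rw [hpl]; nlinarith
    have h2 : (lam * Real.sqrt (dist x x₀)) ^ 2 ≤ pl x ^ 2 :=
      pow_le_pow_left₀ (by positivity) h1 2
    calc lam ^ 2 * dist x x₀ = (lam * Real.sqrt (dist x x₀)) ^ 2 := by
          rw [mul_pow, Real.sq_sqrt dist_nonneg]
      _ ≤ pl x ^ 2 := h2
  have hd2 : ∀ g, lam ^ 2 * dist (act g x₀) x₀ ≤ δ g ^ 2 := by
    intro g
    have h1 : lam * Real.sqrt (dist (act g x₀) x₀) ≤ δ g := by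
      rw [hδ]
      nlinarith [Real.sqrt_nonneg (max (c g) 1), Real.sqrt_le_sqrt (le_max_right (c g) 1)]
    have h2 : (lam * Real.sqrt (dist (act g x₀) x₀)) ^ 2 ≤ δ g ^ 2 :=
      pow_le_pow_left₀ (by positivity) h1 2
    calc lam ^ 2 * dist (act g x₀) x₀ = (lam * Real.sqrt (dist (act g x₀) x₀)) ^ 2 := by
          rw [mul_pow, Real.sq_sqrt dist_nonneg]
      _ ≤ δ g ^ 2 := h2
  have hplact : ∀ g (x : E), pl (act g x) ≤ δ g * pl x := by
    intro g x
    rw [hpl, hpl, hδ]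
    have h1 : dist (act g x) x₀ ≤ c g * dist x x₀ + dist (act g x₀) x₀ := by
      calc dist (act g x) x₀ ≤ dist (act g x) (act g x₀) + dist (act g x₀) x₀ := dist_triangle _ _ _
        _ ≤ c g * dist x x₀ + dist (act g x₀) x₀ := by
            have := hcLip g x x₀; linarith
    have h2 : Real.sqrt (dist (act g x) x₀)
        ≤ Real.sqrt (c g) * Real.sqrt (dist x x₀) + Real.sqrt (dist (act g x₀) x₀) := by
      calc Real.sqrt (dist (act g x) x₀)
          ≤ Real.sqrt (c g * dist x x₀ + dist (act g x₀) x₀) := Real.sqrt_le_sqrt h1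
        _ ≤ Real.sqrt (c g * dist x x₀) + Real.sqrt (dist (act g x₀) x₀) :=
            sqrt_add_le' (mul_nonneg (hc0 g) dist_nonneg) dist_nonneg
        _ = Real.sqrt (c g) * Real.sqrt (dist x x₀) + Real.sqrt (dist (act g x₀) x₀) := by
            rw [Real.sqrt_mul (hc0 g)]
    have h3 : (1:ℝ) ≤ Real.sqrt (max (c g) 1) := by
      rw [show (1:ℝ) = Real.sqrt 1 by simp]
      exact Real.sqrt_le_sqrt (by rw [Real.sqrt_one]; exact le_max_right _ _)
    have h4' : Real.sqrt (c g) ≤ Real.sqrt (max (c g) 1) := Real.sqrt_le_sqrt (le_max_left _ _)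
    have hu : (0:ℝ) ≤ Real.sqrt (dist x x₀) := Real.sqrt_nonneg _
    have hv : (0:ℝ) ≤ Real.sqrt (dist (act g x₀) x₀) := Real.sqrt_nonneg _
    have h5 : lam * (Real.sqrt (c g) * Real.sqrt (dist x x₀))
        ≤ lam * (Real.sqrt (max (c g) 1) * Real.sqrt (dist x x₀)) := by
      apply mul_le_mul_of_nonneg_left _ hlam0.le
      exact mul_le_mul_of_nonneg_right h4' hu
    nlinarith [mul_nonneg (mul_nonneg hlam0.le hlam0.le) (mul_nonneg hv hu),
      mul_le_mul_of_nonneg_left h2 hlam0.le]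
  set B := |ξ x₀| with hBdef
  have hB0 : 0 ≤ B := abs_nonneg _
  have hξb : ∀ (g : G) (x : E), |ξ (act g x)| ≤ B + C / lam ^ 2 * (c g * pl x ^ 2 + δ g ^ 2) := by
    intro g x
    have h1 : |ξ (act g x)| ≤ B + C * dist (act g x) x₀ := by
      have := hξLip (act g x) x₀
      have habs : |ξ (act g x)| - |ξ x₀| ≤ |ξ (act g x) - ξ x₀| := by
        exact abs_sub_abs_le_abs_sub _ _
      rw [hBdef]; linarith
    have h2 : dist (act g x) x₀ ≤ c g * dist x x₀ + dist (act g x₀) x₀ := by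
      calc dist (act g x) x₀ ≤ dist (act g x) (act g x₀) + dist (act g x₀) x₀ := dist_triangle _ _ _
        _ ≤ c g * dist x x₀ + dist (act g x₀) x₀ := by
            have := hcLip g x x₀; linarith
    have h3 : C * dist (act g x) x₀ ≤ C / lam ^ 2 * (c g * pl x ^ 2 + δ g ^ 2) := by
      rw [div_mul_eq_mul_div, le_div_iff₀ (by positivity : (0:ℝ) < lam ^ 2)]
      have h4' := mul_le_mul_of_nonneg_left (hd1 x) (hc0 g)
      have h5' := hd2 g
      have h6' := mul_le_mul_of_nonneg_left h2 hC
      have hA := mul_le_mul_of_nonneg_right h6' (sq_nonneg lam)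
      have hB' := mul_le_mul_of_nonneg_left h4' hC
      have hB'' := mul_le_mul_of_nonneg_left h5' hC
      nlinarith [hA, hB', hB'']
    linarith
  -- the integrable weight functions and constants
  set W : G → ℝ := fun g => B + B * δ g ^ 4 + C / lam ^ 2 * (c g * δ g ^ 2)
      + C / lam ^ 2 * δ g ^ 4 with hWdef
  have intW : Integrable W π := by
    exact (((integrable_const B).add (h4.const_mul B)).add (hc2.const_mul (C / lam ^ 2))).add
      (h4.const_mul (C / lam ^ 2))
  have hW0 : ∀ g, 0 ≤ W g := by
    intro g
    have := hc0 g; have := hδ0 g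
    have hK : (0:ℝ) ≤ C / lam ^ 2 := by positivity
    simp only [hWdef]
    positivity
  set KI := ∫ g, W g ∂π with hKIdef
  have hKI0 : 0 ≤ KI := integral_nonneg hW0
  set V : G → ℝ := fun g => (B + 2 * C / lam ^ 2) * (Real.sqrt (c g) * δ g ^ 4)
      + 2 * C / lam * (c g * δ g ^ 2) with hVdef
  have intV : Integrable V π := (hc4.const_mul _).add (hc2.const_mul _)
  have hV0 : ∀ g, 0 ≤ V g := by
    intro g
    have := hc0 g; have := hδ0 g
    have h1 : (0:ℝ) ≤ B + 2 * C / lam ^ 2 := by positivity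
    have h2 : (0:ℝ) ≤ 2 * C / lam := by positivity
    have h3 : (0:ℝ) ≤ Real.sqrt (c g) := Real.sqrt_nonneg _
    simp only [hVdef]
    positivity
  set KM := ∫ g, V g ∂π with hKMdef
  have hKM0 : 0 ≤ KM := integral_nonneg hV0
  refine ⟨2 * KI + 2 * KM + 1, by positivity, ?_⟩
  intro f t
  rcases eq_or_ne t 0 with rfl | ht
  · -- t = 0 : the left-hand side vanishes
    have hD0 : ∀ x : E, Qt 0 f x - Qop f x = 0 := by
      intro x
      rw [hQt, hQop, sub_eq_zero]
      congr 1
      funext g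
      simp
    have hz1 : m3 (fun x => Qt 0 f x - Qop f x) ≤ 0 := by
      rw [hm3]
      exact iSup_le fun x => iSup_le fun y => by simp [hD0]
    have hz2 : i3 (fun x => Qt 0 f x - Qop f x) ≤ 0 := by
      rw [hi3]
      exact iSup_le fun x => by simp [hD0]
    calc m3 (fun x => Qt 0 f x - Qop f x) + i3 (fun x => Qt 0 f x - Qop f x) ≤ 0 + 0 :=
          add_le_add hz1 hz2
      _ ≤ _ := by simp
  rcases eq_or_ne (m1 f + i1 f) ⊤ with htop | htop
  · -- infinite right-hand side
    rw [htop, ENNReal.mul_top]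
    · exact le_top
    · refine (ENNReal.ofReal_pos.mpr ?_).ne'
      have : 0 < |t| := abs_pos.mpr ht
      positivity
  -- main case: `f ∈ L₁`
  have hm1top : m1 f ≠ ⊤ := fun h => htop (by rw [ENNReal.add_eq_top]; exact Or.inl h)
  have hi1top : i1 f ≠ ⊤ := fun h => htop (by rw [ENNReal.add_eq_top]; exact Or.inr h)
  set M := (m1 f).toReal with hMdef
  set I := (i1 f).toReal with hIdef
  have hM0 : 0 ≤ M := ENNReal.toReal_nonneg
  have hI0 : 0 ≤ I := ENNReal.toReal_nonneg
  have hfI : ∀ x : E, ‖f x‖ ≤ I * pl x ^ 2 := by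
    intro x
    have hppos : (0:ℝ) < pl x ^ 2 := by
      have := hpl1 x; positivity
    have h1 : (‖f x‖₊ : ℝ≥0∞) / ENNReal.ofReal (pl x ^ 2) ≤ i1 f := by
      rw [hi1]
      exact le_iSup (fun x => (‖f x‖₊ : ℝ≥0∞) / ENNReal.ofReal (pl x ^ 2)) x
    have h2 : (‖f x‖₊ : ℝ≥0∞) ≤ i1 f * ENNReal.ofReal (pl x ^ 2) :=
      (ENNReal.div_le_iff ((ENNReal.ofReal_pos.mpr hppos).ne') ENNReal.ofReal_ne_top).mp h1
    have h3 := ENNReal.toReal_mono (ENNReal.mul_ne_top hi1top ENNReal.ofReal_ne_top) h2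
    rw [ENNReal.toReal_mul, ENNReal.toReal_ofReal hppos.le] at h3
    simpa using h3
  have hfM : ∀ x y : E, ‖f x - f y‖ ≤ M * (Real.sqrt (dist x y) * pl x * pl y) := by
    intro x y
    rcases eq_or_ne x y with rfl | hxy
    · simp
    · have hs : (0:ℝ) < Real.sqrt (dist x y) * pl x * pl y := by
        have h1 : (0:ℝ) < dist x y := dist_pos.mpr hxy
        have h2 := hpl1 x; have h3 := hpl1 y
        have := Real.sqrt_pos.mpr h1
        positivity
      have h1 : (‖f x - f y‖₊ : ℝ≥0∞) / ENNReal.ofReal (Real.sqrt (dist x y) * pl x * pl y)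
          ≤ m1 f := by
        rw [hm1]
        exact le_iSup₂ (f := fun x y => (‖f x - f y‖₊ : ℝ≥0∞)
          / ENNReal.ofReal (Real.sqrt (dist x y) * pl x * pl y)) x y
      have h2 : (‖f x - f y‖₊ : ℝ≥0∞)
          ≤ m1 f * ENNReal.ofReal (Real.sqrt (dist x y) * pl x * pl y) :=
        (ENNReal.div_le_iff ((ENNReal.ofReal_pos.mpr hs).ne') ENNReal.ofReal_ne_top).mp h1
      have h3 := ENNReal.toReal_mono (ENNReal.mul_ne_top hm1top ENNReal.ofReal_ne_top) h2
      rw [ENNReal.toReal_mul, ENNReal.toReal_ofReal hs.le] at h3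
      simpa using h3
  -- continuity and measurability
  have hplc : Continuous pl := by
    have : pl = fun x => 1 + lam * Real.sqrt (dist x x₀) := funext hpl
    rw [this]
    fun_prop
  have hfc : Continuous f := by
    rw [continuous_iff_continuousAt]
    intro x₁
    have hb : ∀ y, ‖f y - f x₁‖ ≤ M * (Real.sqrt (dist y x₁) * pl y * pl x₁) := fun y => hfM y x₁
    have hgc : Continuous fun y => M * (Real.sqrt (dist y x₁) * pl y * pl x₁) := by fun_prop
    have hg : Filter.Tendsto (fun y => M * (Real.sqrt (dist y x₁) * pl y * pl x₁)) (nhds x₁)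
        (nhds 0) := by
      have := hgc.tendsto x₁
      simpa using this
    have h0 := squeeze_zero_norm hb hg
    have h1 := h0.add_const (f x₁)
    unfold ContinuousAt
    simpa using h1
  have hξc : Continuous ξ := by
    have : LipschitzWith (Real.toNNReal C) ξ := by
      apply LipschitzWith.of_dist_le_mul
      intro x y
      rw [Real.dist_eq, Real.coe_toNNReal C hC]
      exact hξLip x y
    exact this.continuous
  have hactm : ∀ x : E, Measurable fun g => act g x := fun x =>
    hact.comp (measurable_id.prodMk measurable_const)
  have harg : ∀ θ : ℝ, Complex.I * (t:ℂ) * (θ:ℂ) = Complex.I * ((t * θ : ℝ) : ℂ) := by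
    intro θ; push_cast; ring
  have hsqlem : ∀ u : ℝ, 0 ≤ u → u ^ 2 ≤ 1 + u ^ 4 := by
    intro u hu; nlinarith [sq_nonneg (u ^ 2 - 1)]
  -- integrability of the integrands
  have hfb2 : ∀ (x : E) (g : G), ‖f (act g x)‖ ≤ I * (δ g * pl x) ^ 2 := by
    intro x g
    calc ‖f (act g x)‖ ≤ I * pl (act g x) ^ 2 := hfI _
      _ ≤ I * (δ g * pl x) ^ 2 :=
        mul_le_mul_of_nonneg_left (pow_le_pow_left₀ (hplnn _) (hplact g x) 2) hI0
  have hfb : ∀ (x : E) (g : G), ‖f (act g x)‖ ≤ I * pl x ^ 2 * (1 + δ g ^ 4) := by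
    intro x g
    have h1 := hfb2 x g
    have h2 := hsqlem (δ g) (hδ0 g)
    nlinarith [mul_nonneg (mul_nonneg hI0 (sq_nonneg (pl x))) (sub_nonneg.mpr h2)]
  have intdom : ∀ x : E, Integrable (fun g => I * pl x ^ 2 * (1 + δ g ^ 4)) π := fun x =>
    ((integrable_const 1).add h4).const_mul _
  have int_f : ∀ x : E, Integrable (fun g => f (act g x)) π := fun x =>
    Integrable.mono' (intdom x) ((hfc.measurable.comp (hactm x)).aestronglyMeasurable)
      (Filter.Eventually.of_forall (hfb x))
  have int_ef : ∀ x : E,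
      Integrable (fun g => Complex.exp (Complex.I * t * ξ (act g x)) * f (act g x)) π := by
    intro x
    refine Integrable.mono' (intdom x) ?_ (Filter.Eventually.of_forall fun g => ?_)
    · have hcont : Continuous fun z : E => Complex.exp (Complex.I * t * ξ z) * f z := by
        apply Continuous.mul _ hfc
        apply Complex.continuous_exp.comp
        fun_prop
      exact (hcont.measurable.comp (hactm x)).aestronglyMeasurable
    · rw [norm_mul]
      have h1 : ‖Complex.exp (Complex.I * t * ξ (act g x))‖ = 1 := by
        rw [harg]; exact norm_exp_I_mul _
      rw [h1, one_mul]
      exact hfb x g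
  have intφ : ∀ x : E,
      Integrable (fun g => (Complex.exp (Complex.I * t * ξ (act g x)) - 1) * f (act g x)) π := by
    intro x
    have heq : (fun g => Complex.exp (Complex.I * t * ξ (act g x)) * f (act g x) - f (act g x))
        = fun g => (Complex.exp (Complex.I * t * ξ (act g x)) - 1) * f (act g x) := by
      funext g; ring
    exact heq ▸ ((int_ef x).sub (int_f x))
  have hsub : ∀ x : E, Qt t f x - Qop f x
      = ∫ g, (Complex.exp (Complex.I * t * ξ (act g x)) - 1) * f (act g x) ∂π := by
    intro x
    rw [hQt, hQop, ← integral_sub (int_ef x) (int_f x)]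
    congr 1
    funext g
    ring
  -- key pointwise estimate for `i3`
  have key_i : ∀ x : E, ‖Qt t f x - Qop f x‖ ≤ 2 * |t| * (M + I) * KI * pl x ^ 4 := by
    intro x
    rw [hsub x]
    have hptw : ∀ g, ‖(Complex.exp (Complex.I * t * ξ (act g x)) - 1) * f (act g x)‖
        ≤ 2 * |t| * I * pl x ^ 4 * W g := by
      intro g
      rw [norm_mul]
      have h1 : ‖Complex.exp (Complex.I * t * ξ (act g x)) - 1‖ ≤ 2 * |t * ξ (act g x)| := by
        rw [harg]; exact norm_exp_I_mul_sub_one _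
      have h1' : ‖Complex.exp (Complex.I * t * ξ (act g x)) - 1‖
          ≤ 2 * (|t| * (B + C / lam ^ 2 * (c g * pl x ^ 2 + δ g ^ 2))) := by
        refine h1.trans ?_
        rw [abs_mul]
        exact mul_le_mul_of_nonneg_left
          (mul_le_mul_of_nonneg_left (hξb g x) (abs_nonneg t)) (by norm_num)
      have h2 := hfb2 x g
      have hK : (0:ℝ) ≤ C / lam ^ 2 := by positivity
      have hnn0 : (0:ℝ) ≤ 2 * (|t| * (B + C / lam ^ 2 * (c g * pl x ^ 2 + δ g ^ 2))) :=
        mul_nonneg (by norm_num) (mul_nonneg (abs_nonneg t) (add_nonneg hB0 (mul_nonneg hK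
          (add_nonneg (mul_nonneg (hc0 g) (pow_nonneg (hplnn x) 2)) (pow_nonneg (hδ0 g) 2)))))
      calc ‖Complex.exp (Complex.I * t * ξ (act g x)) - 1‖ * ‖f (act g x)‖
          ≤ (2 * (|t| * (B + C / lam ^ 2 * (c g * pl x ^ 2 + δ g ^ 2)))) * (I * (δ g * pl x) ^ 2) :=
            mul_le_mul h1' h2 (norm_nonneg _) hnn0
        _ ≤ 2 * |t| * I * pl x ^ 4 * W g := by
            have ha1 : 1 ≤ pl x := hpl1 x
            have hd1' : 1 ≤ δ g := hδ1 g
            have hccg := hc0 g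
            have hT : (0:ℝ) ≤ |t| := abs_nonneg t
            have e1 : δ g ^ 2 * pl x ^ 2 ≤ δ g ^ 4 * pl x ^ 4 :=
              mul_le_mul (pow_le_pow_right₀ hd1' (by norm_num))
                (pow_le_pow_right₀ ha1 (by norm_num)) (pow_nonneg (hplnn x) 2)
                (pow_nonneg (hδ0 g) 4)
            have e2 : δ g ^ 4 * pl x ^ 2 ≤ δ g ^ 4 * pl x ^ 4 :=
              mul_le_mul_of_nonneg_left (pow_le_pow_right₀ ha1 (by norm_num))
                (pow_nonneg (hδ0 g) 4)
            simp only [hWdef]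
            linarith [mul_nonneg (mul_nonneg (mul_nonneg hT hI0) hB0) (sub_nonneg.mpr e1),
              mul_nonneg (mul_nonneg (mul_nonneg hT hI0) hK) (sub_nonneg.mpr e2),
              mul_nonneg (mul_nonneg (mul_nonneg hT hI0) hB0) (pow_nonneg (hplnn x) 4)]
    calc ‖∫ g, (Complex.exp (Complex.I * t * ξ (act g x)) - 1) * f (act g x) ∂π‖
        ≤ ∫ g, 2 * |t| * I * pl x ^ 4 * W g ∂π :=
          norm_integral_le_of_norm_le (intW.const_mul _) (Filter.Eventually.of_forall hptw)
      _ = 2 * |t| * I * pl x ^ 4 * KI := by rw [integral_const_mul]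
      _ ≤ 2 * |t| * (M + I) * KI * pl x ^ 4 := by
          nlinarith [mul_nonneg (mul_nonneg (mul_nonneg (abs_nonneg t) hM0) hKI0)
            (pow_nonneg (hplnn x) 4)]
  -- key pointwise estimate for `m3`
  have key_m : ∀ x y : E, ‖(Qt t f x - Qop f x) - (Qt t f y - Qop f y)‖
      ≤ 2 * |t| * (M + I) * KM * (Real.sqrt (dist x y) * pl x ^ 3 * pl y ^ 3) := by
    intro x y
    rw [hsub x, hsub y, ← integral_sub (intφ x) (intφ y)]
    set s := Real.sqrt (dist x y) with hsdef
    have hs0 : 0 ≤ s := Real.sqrt_nonneg _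
    have ha1 : 1 ≤ pl x := hpl1 x
    have hb1 : 1 ≤ pl y := hpl1 y
    have hsab : lam * s ≤ 2 * (pl x * pl y) := by
      have h1 : s ≤ Real.sqrt (dist x x₀) + Real.sqrt (dist y x₀) := by
        calc s ≤ Real.sqrt (dist x x₀ + dist y x₀) := by
              apply Real.sqrt_le_sqrt
              calc dist x y ≤ dist x x₀ + dist x₀ y := dist_triangle _ _ _
                _ = dist x x₀ + dist y x₀ := by rw [dist_comm x₀ y]
          _ ≤ Real.sqrt (dist x x₀) + Real.sqrt (dist y x₀) :=
              sqrt_add_le' dist_nonneg dist_nonneg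
      have h2 : lam * Real.sqrt (dist x x₀) ≤ pl x - 1 := by rw [hpl]; ring_nf; nlinarith
      have h3 : lam * Real.sqrt (dist y x₀) ≤ pl y - 1 := by rw [hpl]; ring_nf; nlinarith
      have h4' := mul_le_mul_of_nonneg_left h1 hlam0.le
      nlinarith [mul_nonneg (sub_nonneg.mpr ha1) (sub_nonneg.mpr hb1)]
    have hptw : ∀ g, ‖(Complex.exp (Complex.I * t * ξ (act g x)) - 1) * f (act g x)
        - (Complex.exp (Complex.I * t * ξ (act g y)) - 1) * f (act g y)‖
        ≤ 2 * |t| * (M + I) * (s * pl x ^ 3 * pl y ^ 3) * V g := by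
      intro g
      set ea := Complex.exp (Complex.I * t * ξ (act g x)) with headef
      set eb := Complex.exp (Complex.I * t * ξ (act g y)) with hebdef
      have hdec : (ea - 1) * f (act g x) - (eb - 1) * f (act g y)
          = (ea - 1) * (f (act g x) - f (act g y)) + (ea - eb) * f (act g y) := by ring
      have hT : (0:ℝ) ≤ |t| := abs_nonneg t
      have hK : (0:ℝ) ≤ C / lam ^ 2 := by positivity
      have hr0 : (0:ℝ) ≤ Real.sqrt (c g) := Real.sqrt_nonneg _
      have hd1' : 1 ≤ δ g := hδ1 g
      have hδ0' : (0:ℝ) ≤ δ g := hδ0 g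
      have hccg := hc0 g
      -- first term
      have hfa : ‖f (act g x) - f (act g y)‖
          ≤ M * (Real.sqrt (c g) * s * (δ g * pl x) * (δ g * pl y)) := by
        have h1 := hfM (act g x) (act g y)
        have h2 : Real.sqrt (dist (act g x) (act g y)) ≤ Real.sqrt (c g) * s := by
          calc Real.sqrt (dist (act g x) (act g y)) ≤ Real.sqrt (c g * dist x y) :=
                Real.sqrt_le_sqrt (hcLip g x y)
            _ = Real.sqrt (c g) * s := by rw [Real.sqrt_mul (hc0 g)]
        calc ‖f (act g x) - f (act g y)‖
            ≤ M * (Real.sqrt (dist (act g x) (act g y)) * pl (act g x) * pl (act g y)) := h1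
          _ ≤ M * (Real.sqrt (c g) * s * (δ g * pl x) * (δ g * pl y)) := by
              apply mul_le_mul_of_nonneg_left _ hM0
              exact mono3 (Real.sqrt_nonneg _) (hplnn _) (hplnn _) h2 (hplact g x) (hplact g y)
      have hea1 : ‖ea - 1‖ ≤ 2 * (|t| * (B + C / lam ^ 2 * (c g * pl x ^ 2 + δ g ^ 2))) := by
        rw [headef, harg]
        refine (norm_exp_I_mul_sub_one _).trans ?_
        rw [abs_mul]
        exact mul_le_mul_of_nonneg_left
          (mul_le_mul_of_nonneg_left (hξb g x) (abs_nonneg t)) (by norm_num)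
      have hnn1 : (0:ℝ) ≤ 2 * (|t| * (B + C / lam ^ 2 * (c g * pl x ^ 2 + δ g ^ 2))) :=
        mul_nonneg (by norm_num) (mul_nonneg (abs_nonneg t) (add_nonneg hB0 (mul_nonneg hK
          (add_nonneg (mul_nonneg (hc0 g) (pow_nonneg (hplnn x) 2)) (pow_nonneg (hδ0 g) 2)))))
      have htermA : ‖(ea - 1) * (f (act g x) - f (act g y))‖
          ≤ 2 * |t| * (M + I) * (s * pl x ^ 3 * pl y ^ 3)
            * ((B + 2 * C / lam ^ 2) * (Real.sqrt (c g) * δ g ^ 4)) := by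
        rw [norm_mul]
        calc ‖ea - 1‖ * ‖f (act g x) - f (act g y)‖
            ≤ (2 * (|t| * (B + C / lam ^ 2 * (c g * pl x ^ 2 + δ g ^ 2))))
              * (M * (Real.sqrt (c g) * s * (δ g * pl x) * (δ g * pl y))) :=
              mul_le_mul hea1 hfa (norm_nonneg _) hnn1
          _ ≤ _ := by
              have h2K : 2 * C / lam ^ 2 = 2 * (C / lam ^ 2) := by ring
              rw [h2K]
              have pax : pl x ≤ pl x ^ 3 := by
                nlinarith [mul_nonneg (hplnn x) (mul_nonneg (sub_nonneg.mpr ha1)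
                  (by linarith : (0:ℝ) ≤ pl x + 1))]
              have pay : pl y ≤ pl y ^ 3 := by
                nlinarith [mul_nonneg (hplnn y) (mul_nonneg (sub_nonneg.mpr hb1)
                  (by linarith : (0:ℝ) ≤ pl y + 1))]
              have pd : δ g ^ 2 ≤ δ g ^ 4 := pow_le_pow_right₀ hd1' (by norm_num)
              have e1 : δ g ^ 2 * pl x * pl y ≤ δ g ^ 4 * pl x ^ 3 * pl y ^ 3 :=
                mono3 (pow_nonneg hδ0' 2) (hplnn x) (hplnn y) pd pax pay
              have e2 : c g * δ g ^ 2 * pl x ^ 3 * pl y ≤ δ g ^ 4 * pl x ^ 3 * pl y ^ 3 := by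
                have h1 : c g * δ g ^ 2 ≤ δ g ^ 4 := by
                  nlinarith [mul_le_mul_of_nonneg_right (hcδ2 g) (pow_nonneg hδ0' 2)]
                exact mono3 (mul_nonneg hccg (pow_nonneg hδ0' 2)) (pow_nonneg (hplnn x) 3)
                  (hplnn y) h1 le_rfl pay
              have e3 : δ g ^ 4 * pl x * pl y ≤ δ g ^ 4 * pl x ^ 3 * pl y ^ 3 :=
                mono3 (pow_nonneg hδ0' 4) (hplnn x) (hplnn y) le_rfl pax pay
              generalize hgen : C / lam ^ 2 = K' at hK ⊢
              linarith [mul_nonneg (mul_nonneg (mul_nonneg (mul_nonneg hT hM0) hB0)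
                  (mul_nonneg hr0 hs0)) (sub_nonneg.mpr e1),
                mul_nonneg (mul_nonneg (mul_nonneg (mul_nonneg hT hM0) hK)
                  (mul_nonneg hr0 hs0)) (sub_nonneg.mpr e2),
                mul_nonneg (mul_nonneg (mul_nonneg (mul_nonneg hT hM0) hK)
                  (mul_nonneg hr0 hs0)) (sub_nonneg.mpr e3),
                mul_nonneg (mul_nonneg (mul_nonneg (mul_nonneg hT hI0) (add_nonneg hB0
                  (by linarith : (0:ℝ) ≤ 2 * K'))) (mul_nonneg hr0 hs0))
                  (mul_nonneg (mul_nonneg (pow_nonneg hδ0' 4) (pow_nonneg (hplnn x) 3))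
                    (pow_nonneg (hplnn y) 3))]
      have htermB : ‖(ea - eb) * f (act g y)‖
          ≤ 2 * |t| * (M + I) * (s * pl x ^ 3 * pl y ^ 3)
            * (2 * C / lam * (c g * δ g ^ 2)) := by
        rw [norm_mul]
        have heab : ‖ea - eb‖ ≤ 2 * (|t| * (C * (c g * (s * s)))) := by
          rw [headef, hebdef, harg, harg]
          refine (norm_exp_I_mul_sub_exp_I_mul _ _).trans ?_
          have : t * ξ (act g x) - t * ξ (act g y) = t * (ξ (act g x) - ξ (act g y)) := by ring
          rw [this, abs_mul]
          have h1 : |ξ (act g x) - ξ (act g y)| ≤ C * (c g * (s * s)) := by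
            have h2 := hξLip (act g x) (act g y)
            have h3 := hcLip g x y
            have h4' : s * s = dist x y := Real.mul_self_sqrt dist_nonneg
            rw [h4']
            calc |ξ (act g x) - ξ (act g y)| ≤ C * dist (act g x) (act g y) := h2
              _ ≤ C * (c g * dist x y) := mul_le_mul_of_nonneg_left h3 hC
          exact mul_le_mul_of_nonneg_left
            (mul_le_mul_of_nonneg_left h1 (abs_nonneg t)) (by norm_num)
        have hfy : ‖f (act g y)‖ ≤ I * (δ g * pl y) ^ 2 := hfb2 y g
        have hnn2 : (0:ℝ) ≤ 2 * (|t| * (C * (c g * (s * s)))) :=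
          mul_nonneg (by norm_num) (mul_nonneg hT (mul_nonneg hC (mul_nonneg hccg
            (mul_nonneg hs0 hs0))))
        have hsd : s ≤ 2 * (pl x * pl y) / lam := by
          rw [le_div_iff₀ hlam0]; linarith [hsab]
        have q1 : pl x * (pl y * pl y ^ 2) ≤ pl x ^ 3 * pl y ^ 3 := by
          have hx2 : (1:ℝ) ≤ pl x ^ 2 := by nlinarith
          nlinarith [mul_nonneg (mul_nonneg (hplnn x) (sub_nonneg.mpr hx2))
            (pow_nonneg (hplnn y) 3)]
        have e5 : I * (pl x * (pl y * pl y ^ 2)) ≤ (M + I) * (pl x ^ 3 * pl y ^ 3) := by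
          calc I * (pl x * (pl y * pl y ^ 2)) ≤ I * (pl x ^ 3 * pl y ^ 3) :=
                mul_le_mul_of_nonneg_left q1 hI0
            _ ≤ (M + I) * (pl x ^ 3 * pl y ^ 3) := mul_le_mul_of_nonneg_right (by linarith)
                (mul_nonneg (pow_nonneg (hplnn x) 3) (pow_nonneg (hplnn y) 3))
        calc ‖ea - eb‖ * ‖f (act g y)‖
            ≤ (2 * (|t| * (C * (c g * (s * s))))) * (I * (δ g * pl y) ^ 2) :=
              mul_le_mul heab hfy (norm_nonneg _) hnn2
          _ = (2 * |t| * C * c g * (I * (δ g * pl y) ^ 2)) * (s * s) := by ring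
          _ ≤ (2 * |t| * C * c g * (I * (δ g * pl y) ^ 2)) * (s * (2 * (pl x * pl y) / lam)) := by
              apply mul_le_mul_of_nonneg_left (mul_le_mul_of_nonneg_left hsd hs0)
              exact mul_nonneg (mul_nonneg (mul_nonneg (mul_nonneg (by norm_num) hT) hC) hccg)
                (mul_nonneg hI0 (sq_nonneg _))
          _ = (2 * C / lam * (c g * δ g ^ 2)) * (2 * |t| * s)
              * (I * (pl x * (pl y * pl y ^ 2))) := by
              field_simp
          _ ≤ (2 * C / lam * (c g * δ g ^ 2)) * (2 * |t| * s)
              * ((M + I) * (pl x ^ 3 * pl y ^ 3)) := by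
              apply mul_le_mul_of_nonneg_left e5
              exact mul_nonneg (mul_nonneg (div_nonneg (by linarith) hlam0.le)
                (mul_nonneg hccg (pow_nonneg hδ0' 2)))
                (mul_nonneg (mul_nonneg (by norm_num : (0:ℝ) ≤ 2) hT) hs0)
          _ = 2 * |t| * (M + I) * (s * pl x ^ 3 * pl y ^ 3)
              * (2 * C / lam * (c g * δ g ^ 2)) := by ring
      calc ‖(ea - 1) * f (act g x) - (eb - 1) * f (act g y)‖
          = ‖(ea - 1) * (f (act g x) - f (act g y)) + (ea - eb) * f (act g y)‖ := by rw [hdec]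
        _ ≤ ‖(ea - 1) * (f (act g x) - f (act g y))‖ + ‖(ea - eb) * f (act g y)‖ := norm_add_le _ _
        _ ≤ 2 * |t| * (M + I) * (s * pl x ^ 3 * pl y ^ 3)
            * ((B + 2 * C / lam ^ 2) * (Real.sqrt (c g) * δ g ^ 4))
            + 2 * |t| * (M + I) * (s * pl x ^ 3 * pl y ^ 3)
            * (2 * C / lam * (c g * δ g ^ 2)) := add_le_add htermA htermB
        _ = 2 * |t| * (M + I) * (s * pl x ^ 3 * pl y ^ 3) * V g := by
            simp only [hVdef]; ring
    calc ‖∫ g, (Complex.exp (Complex.I * t * ξ (act g x)) - 1) * f (act g x)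
          - (Complex.exp (Complex.I * t * ξ (act g y)) - 1) * f (act g y) ∂π‖
        ≤ ∫ g, 2 * |t| * (M + I) * (s * pl x ^ 3 * pl y ^ 3) * V g ∂π :=
          norm_integral_le_of_norm_le (intV.const_mul _) (Filter.Eventually.of_forall hptw)
      _ = 2 * |t| * (M + I) * (s * pl x ^ 3 * pl y ^ 3) * KM := by rw [integral_const_mul]
      _ = 2 * |t| * (M + I) * KM * (s * pl x ^ 3 * pl y ^ 3) := by ring
  -- assemble the `ENNReal` statement
  have hMI0 : 0 ≤ M + I := add_nonneg hM0 hI0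
  have hT0 : (0:ℝ) ≤ |t| := abs_nonneg t
  have hm3b : m3 (fun x => Qt t f x - Qop f x)
      ≤ ENNReal.ofReal (2 * |t| * (M + I) * KM) := by
    rw [hm3]
    refine iSup_le fun x => iSup_le fun y => ?_
    apply ENNReal.div_le_of_le_mul
    rw [← enorm_eq_nnnorm, ← ofReal_norm, ← ENNReal.ofReal_mul (by positivity)]
    exact ENNReal.ofReal_le_ofReal (key_m x y)
  have hi3b : i3 (fun x => Qt t f x - Qop f x)
      ≤ ENNReal.ofReal (2 * |t| * (M + I) * KI) := by
    rw [hi3]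
    refine iSup_le fun x => ?_
    apply ENNReal.div_le_of_le_mul
    rw [← enorm_eq_nnnorm, ← ofReal_norm, ← ENNReal.ofReal_mul (by positivity)]
    exact ENNReal.ofReal_le_ofReal (key_i x)
  calc m3 (fun x => Qt t f x - Qop f x) + i3 (fun x => Qt t f x - Qop f x)
      ≤ ENNReal.ofReal (2 * |t| * (M + I) * KM) + ENNReal.ofReal (2 * |t| * (M + I) * KI) :=
        add_le_add hm3b hi3b
    _ = ENNReal.ofReal (2 * |t| * (M + I) * KM + 2 * |t| * (M + I) * KI) :=
        (ENNReal.ofReal_add (by positivity) (by positivity)).symm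
    _ ≤ ENNReal.ofReal (((2 * KI + 2 * KM + 1) * |t|) * (M + I)) := by
        apply ENNReal.ofReal_le_ofReal
        nlinarith [mul_nonneg hT0 hMI0]
    _ = ENNReal.ofReal ((2 * KI + 2 * KM + 1) * |t|) * ENNReal.ofReal (M + I) :=
        ENNReal.ofReal_mul (by positivity)
    _ = ENNReal.ofReal ((2 * KI + 2 * KM + 1) * |t|) * (m1 f + i1 f) := by
        rw [ENNReal.ofReal_add hM0 hI0, hMdef, hIdef, ENNReal.ofReal_toReal hm1top,
          ENNReal.ofReal_toReal hi1top]
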